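/- Let f be a cellular automaton on 𝒜^{ℤ^d} that is permutative (permutative at every nonzero extreme point of the convex hull 𝕀 of I ∪ {0}, where I is its domain). Then for every k ≥ 1, f^k is permutative and the convex hull 𝕀_k of I_k ∪ {0} (I_k the domain of f^k) equals k𝕀. -/

import Mathlib

open Set Filter Pointwise

/-- The group `ℤ^d`. -/
abbrev Zd (d : ℕ) := Fin d → ℤ

/-- Configurations `𝒜^{ℤ^d}`. -/
abbrev Config (A : Type*) (d : ℕ) := Zd d → A

/-- The shift action of `ℤ^d`. -/
def shift {A : Type*} {d : ℕ} (l : Zd d) (x : Config A d) : Config A d := fun k => x (k + l)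

/-- Embedding of `ℤ^d` in `ℝ^d`. -/
noncomputable def emb {d : ℕ} (z : Zd d) : EuclideanSpace ℝ (Fin d) :=
  (WithLp.equiv 2 (Fin d → ℝ)).symm fun i => (z i : ℝ)

/-- `g` admits `S` as a memory set: the value of `g x` at `j` only depends on the
coordinates of `x` on `j + S`. -/
def HasRule {A : Type*} {d : ℕ} (g : Config A d → Config A d) (S : Set (Zd d)) : Prop :=
  ∀ x y : Config A d, ∀ j : Zd d, (∀ i ∈ S, x (j + i) = y (j + i)) → g x j = g y j

/-- `S` is the (smallest) domain of the cellular automaton `g`. -/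
def IsCADomain {A : Type*} {d : ℕ} (g : Config A d → Config A d) (S : Set (Zd d)) : Prop :=
  HasRule g S ∧ ∀ T : Set (Zd d), HasRule g T → S ⊆ T

/-- The local rule `F` is permutative at `z`: for every pattern off `z` and every target
letter `a` there is a letter `b` completing the pattern at `z` with output `a`. -/
def PermutativeAt {A : Type*} {d : ℕ} (F : (Zd d → A) → A) (z : Zd d) : Prop :=
  ∀ u : Zd d → A, ∀ a : A, ∃ b : A, F (Function.update u z b) = a

/-! ### Auxiliary material -/

section Aux

variable {d : ℕ} {A : Type*}

lemma emb_apply (z : Zd d) (i : Fin d) : emb z i = (z i : ℝ) := rfl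

lemma emb_add (a b : Zd d) : emb (a + b) = emb a + emb b := by
  ext i; simp [emb_apply]

lemma emb_zero : emb (0 : Zd d) = 0 := by ext i; simp [emb_apply]

lemma emb_inj : Function.Injective (emb (d := d)) := by
  intro a b h; funext i
  have : emb a i = emb b i := congrArg (fun v => v i) h
  rw [emb_apply, emb_apply] at this
  exact Int.cast_injective this

lemma emb_nsmul (k : ℕ) (z : Zd d) : emb (k • z) = (k : ℝ) • emb z := by
  ext i
  have h1 : emb (k • z) i = ((k • z) i : ℝ) := rfl
  have h2 : ((k : ℝ) • emb z) i = (k : ℝ) * emb z i := rfl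
  rw [h1, h2, emb_apply, Pi.smul_apply, nsmul_eq_mul]
  push_cast
  ring

/-- The iterated local rule. -/
def iterRule (F : (Zd d → A) → A) : ℕ → (Zd d → A) → A
  | 0 => fun u => u 0
  | (k+1) => fun u => F fun i => iterRule F k fun j => u (i + j)

/-- The `k`-fold sumset of `I` (with `sumSet I 0 = {0}`). -/
def sumSet (I : Set (Zd d)) : ℕ → Set (Zd d)
  | 0 => {0}
  | (k+1) => I + sumSet I k

lemma sumSet_finite {I : Set (Zd d)} (hI : I.Finite) : ∀ k, (sumSet I k).Finite
  | 0 => Set.finite_singleton 0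
  | (k+1) => hI.add (sumSet_finite hI k)

lemma nsmul_mem_sumSet {I : Set (Zd d)} {z : Zd d} (hz : z ∈ I) :
    ∀ k, 1 ≤ k → k • z ∈ sumSet I k := by
  intro k hk
  induction k with
  | zero => omega
  | succ k ih =>
    rcases Nat.eq_or_lt_of_le hk with h | h
    · have : (1 : ℕ) • z = z + 0 := by rw [one_smul, add_zero]
      rw [← h]
      show (1:ℕ) • z ∈ sumSet I 1
      rw [this]
      exact Set.add_mem_add hz rfl
    · have hk1 : 1 ≤ k := by omega
      rw [succ_nsmul' z k]
      exact Set.add_mem_add hz (ih hk1)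

lemma iter_eq (f : Config A d → Config A d) (F : (Zd d → A) → A)
    (hF : ∀ x : Config A d, ∀ j : Zd d, f x j = F fun i => x (j + i)) :
    ∀ k (x : Config A d) (j : Zd d), f^[k] x j = iterRule F k fun i => x (j + i) := by
  intro k
  induction k with
  | zero => intro x j; simp [iterRule]
  | succ k ih =>
    intro x j
    rw [Function.iterate_succ_apply', hF]
    show F _ = F _
    congr 1
    funext i
    rw [ih]
    show iterRule F k _ = iterRule F k _
    congr 1
    funext j'
    rw [add_assoc]

lemma iter_loc {I : Set (Zd d)} (F : (Zd d → A) → A)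
    (hFloc : ∀ u v : Zd d → A, (∀ i ∈ I, u i = v i) → F u = F v) :
    ∀ k (u v : Zd d → A), (∀ i ∈ sumSet I k, u i = v i) → iterRule F k u = iterRule F k v := by
  intro k
  induction k with
  | zero => intro u v h; exact h 0 rfl
  | succ k ih =>
    intro u v h
    apply hFloc
    intro i hi
    apply ih
    intro j hj
    exact h (i + j) (Set.add_mem_add hi hj)

lemma hasRule_inter {g : Config A d → Config A d} {S T : Set (Zd d)}
    (hS : HasRule g S) (hT : HasRule g T) : HasRule g (S ∩ T) := by
  classical
  intro x y j h
  set z : Config A d := fun n => if n - j ∈ S then x n else y n with hz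
  have h1 : g x j = g z j := by
    apply hS
    intro i hi
    have : (j + i) - j ∈ S := by rwa [add_sub_cancel_left]
    simp only [hz, if_pos this]
  have h2 : g z j = g y j := by
    apply hT
    intro i hi
    have hsub : (j + i) - j = i := add_sub_cancel_left j i
    by_cases hiS : i ∈ S
    · have : (j + i) - j ∈ S := by rwa [hsub]
      simp only [hz, if_pos this]
      exact h i ⟨hiS, hi⟩
    · have : ¬ ((j + i) - j ∈ S) := by rwa [hsub]
      simp only [hz, if_neg this]
  rw [h1, h2]

/-- The intersection of all memory sets. -/
def core (g : Config A d → Config A d) : Set (Zd d) := ⋂₀ {T : Set (Zd d) | HasRule g T}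

lemma core_subset {g : Config A d → Config A d} {T : Set (Zd d)} (hT : HasRule g T) :
    core g ⊆ T := Set.sInter_subset_of_mem hT

lemma hasRule_inter_core {g : Config A d → Config A d} :
    ∀ n (S : Set (Zd d)), S.Finite → S.ncard ≤ n → HasRule g S → HasRule g (S ∩ core g) := by
  intro n
  induction n with
  | zero =>
    intro S hfin hcard hS
    have : S = ∅ := (Set.ncard_eq_zero hfin).1 (Nat.le_zero.1 hcard)
    subst this
    simpa using hS
  | succ n ih =>
    intro S hfin hcard hS
    by_cases hsub : S ⊆ core g
    · rwa [Set.inter_eq_self_of_subset_left hsub]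
    · obtain ⟨i, hiS, hic⟩ := Set.not_subset.1 hsub
      obtain ⟨T, hT, hiT⟩ : ∃ T, HasRule g T ∧ i ∉ T := by
        by_contra hcon
        push_neg at hcon
        exact hic (Set.mem_sInter.2 fun T hT => hcon T hT)
      have hST : HasRule g (S ∩ T) := hasRule_inter hS hT
      have hSTfin : (S ∩ T).Finite := hfin.inter_of_left T
      have hcard' : (S ∩ T).ncard ≤ n := by
        have hlt : (S ∩ T).ncard < S.ncard := by
          apply Set.ncard_lt_ncard _ hfin
          exact ⟨Set.inter_subset_left, fun hsub' => hiT (hsub' hiS).2⟩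
        omega
      have := ih (S ∩ T) hSTfin hcard' hST
      have heq : (S ∩ T) ∩ core g = S ∩ core g := by
        rw [Set.inter_assoc]
        congr 1
        exact Set.inter_eq_self_of_subset_right (core_subset hT)
      rwa [heq] at this

lemma mem_of_permutative [Nontrivial A] {g : Config A d → Config A d} {Fk : (Zd d → A) → A}
    (hgF : ∀ x : Config A d, ∀ j : Zd d, g x j = Fk fun i => x (j + i))
    {w : Zd d} (hP : PermutativeAt Fk w) {T : Set (Zd d)} (hT : HasRule g T) : w ∈ T := by
  classical
  by_contra hw
  obtain ⟨a, a', haa⟩ := exists_pair_ne A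
  set u : Zd d → A := fun _ => a with hu
  obtain ⟨b, hb⟩ := hP u a
  obtain ⟨b', hb'⟩ := hP u a'
  have h0 : ∀ x : Config A d, g x 0 = Fk x := by
    intro x
    rw [hgF]
    congr 1
    funext i
    rw [zero_add]
  have heq : g (Function.update u w b) 0 = g (Function.update u w b') 0 := by
    apply hT
    intro i hi
    rw [zero_add]
    have hiw : i ≠ w := fun h => hw (h ▸ hi)
    rw [Function.update_of_ne hiw, Function.update_of_ne hiw]
  rw [h0, h0, hb, hb'] at heq
  exact haa heq

/-- an extreme point of a convex set that is a genuine convex combination has equal parts -/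
lemma extreme_decomp {E : Type*} [AddCommGroup E] [Module ℝ E]
    {C : Set (E)} {e x y : E} (he : e ∈ C.extremePoints ℝ)
    (hx : x ∈ C) (hy : y ∈ C) {a b : ℝ} (ha : 0 < a) (hb : 0 < b) (hab : a + b = 1)
    (heq : a • x + b • y = e) : x = e := by
  by_cases hxy : x = y
  · subst hxy
    rw [← add_smul, hab, one_smul] at heq
    exact heq
  · have hseg : e ∈ openSegment ℝ x y := ⟨a, b, ha, hb, hab, heq⟩
    exact ((mem_extremePoints.1 he).2 x hx y hy hseg).1

lemma mem_smul_hull {I : Set (Zd d)} :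
    ∀ k, 1 ≤ k → ∀ w ∈ sumSet I k,
      emb w ∈ (k : ℝ) • convexHull ℝ (emb '' (I ∪ {0})) := by
  set C := convexHull ℝ (emb '' (I ∪ {0})) with hC
  have hmemI : ∀ i ∈ I, emb i ∈ C :=
    fun i hi => subset_convexHull ℝ _ ⟨i, Or.inl hi, rfl⟩
  intro k hk
  induction k with
  | zero => omega
  | succ k ih =>
    intro w hw
    obtain ⟨i, hi, j, hj, rfl⟩ := Set.mem_add.1 hw
    rcases Nat.eq_zero_or_pos k with hk0 | hk1
    · subst hk0
      have hj0 : j = 0 := hj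
      subst hj0
      rw [add_zero]
      refine ⟨emb i, hmemI i hi, ?_⟩
      norm_num
    · have hj' : emb j ∈ (k : ℝ) • C := ih hk1 j hj
      have hsplit : ((k : ℝ) + 1) • C = C + (k : ℝ) • C := by
        have h1 : ((k : ℝ) + 1) = 1 + (k : ℝ) := by ring
        rw [h1, Convex.add_smul (convex_convexHull ℝ _) (by norm_num) (by positivity), one_smul]
      rw [emb_add]
      push_cast
      rw [hsplit]
      exact Set.add_mem_add (hmemI i hi) hj'

lemma unique_decomp {I : Set (Zd d)} {z i j : Zd d} {k : ℕ} (hk : 1 ≤ k)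
    (hext : emb z ∈ Set.extremePoints ℝ (convexHull ℝ (emb '' (I ∪ {0}))))
    (hi : i ∈ I) (hj : j ∈ sumSet I k) (heq : i + j = (k + 1) • z) : i = z := by
  classical
  set C := convexHull ℝ (emb '' (I ∪ {0})) with hC
  have hiC : emb i ∈ C := subset_convexHull ℝ _ ⟨i, Or.inl hi, rfl⟩
  obtain ⟨p, hp, hpj⟩ := Set.mem_smul_set.1 (mem_smul_hull k hk j hj)
  -- emb i + (k:ℝ) • p = ((k:ℝ)+1) • emb z
  have hsum : emb i + (k : ℝ) • p = ((k : ℝ) + 1) • emb z := by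
    have h2 := congrArg emb heq
    rw [emb_add, emb_nsmul] at h2
    rw [hpj, h2, Nat.cast_add, Nat.cast_one]
  have hk1 : (0:ℝ) < (k : ℝ) + 1 := by positivity
  set a : ℝ := ((k : ℝ) + 1)⁻¹ with ha
  set b : ℝ := (k : ℝ) * ((k : ℝ) + 1)⁻¹ with hb
  have hcomb : a • emb i + b • p = emb z := by
    have : emb z = a • (emb i + (k : ℝ) • p) := by
      rw [hsum, smul_smul, ha]
      rw [inv_mul_cancel₀ (ne_of_gt hk1), one_smul]
    rw [this, smul_add, smul_smul]
    ring_nf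
    rw [show b = a * k by rw [hb, ha, mul_comm]]
  have hkR : (0:ℝ) < (k : ℝ) := by exact_mod_cast Nat.lt_of_lt_of_le Nat.zero_lt_one hk
  have hapos : 0 < a := by rw [ha]; positivity
  have hbpos : 0 < b := by rw [hb]; positivity
  have habs : a + b = 1 := by
    rw [ha, hb]
    field_simp
    ring
  have hxz : emb i = emb z :=
    extreme_decomp hext hiC hp hapos hbpos habs hcomb
  exact emb_inj hxz

lemma perm_iter [Nonempty A] {I : Set (Zd d)} (F : (Zd d → A) → A)
    (hFloc : ∀ u v : Zd d → A, (∀ i ∈ I, u i = v i) → F u = F v)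
    (hperm : ∀ z : Zd d, z ≠ 0 →
      emb z ∈ Set.extremePoints ℝ (convexHull ℝ (emb '' (I ∪ {0}))) → PermutativeAt F z) :
    ∀ k, 1 ≤ k → ∀ z : Zd d, z ≠ 0 →
      emb z ∈ Set.extremePoints ℝ (convexHull ℝ (emb '' (I ∪ {0}))) →
      PermutativeAt (iterRule F k) (k • z) := by
  classical
  intro k hk
  induction k with
  | zero => omega
  | succ k ih =>
    intro z hz hext
    rcases Nat.eq_zero_or_pos k with hk0 | hk1
    · -- base case k+1 = 1
      subst hk0
      intro u a
      obtain ⟨b, hb⟩ := hperm z hz hext u a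
      refine ⟨b, ?_⟩
      have h1 : ∀ v : Zd d → A, iterRule F 1 v = F v := by
        intro v
        show F _ = F v
        congr 1
        funext i
        show v (i + 0) = v i
        rw [add_zero]
      have hz1 : (0 + 1 : ℕ) • z = z := by simp
      rw [hz1]
      exact (h1 (Function.update u z b)).trans hb
    · -- inductive step
      intro u a
      set Z : Zd d := (k + 1) • z with hZ
      set v : Zd d → A := fun i => iterRule F k fun j => u (i + j) with hv
      set w : Zd d → A := fun j => u (z + j) with hw
      obtain ⟨c, hc⟩ := hperm z hz hext v a
      obtain ⟨b, hb⟩ := ih hk1 z hz hext w c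
      refine ⟨b, ?_⟩
      have key : ∀ i ∈ I,
          iterRule F k (fun j => Function.update u Z b (i + j)) = Function.update v z c i := by
        intro i hi
        by_cases hiz : i = z
        · subst hiz
          rw [Function.update_self]
          have hfun : (fun j => Function.update u Z b (i + j))
              = Function.update w (k • i) b := by
            funext j
            rw [Function.update_apply, Function.update_apply]
            have hiff : i + j = Z ↔ j = k • i := by
              rw [hZ, succ_nsmul' i k]
              constructor
              · intro h; exact add_left_cancel h
              · intro h; rw [h]
            by_cases hj : j = k • i
            · rw [if_pos (hiff.2 hj), if_pos hj]
            · rw [if_neg (fun h => hj (hiff.1 h)), if_neg hj]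
          rw [hfun, hb]
        · rw [Function.update_of_ne hiz]
          apply iter_loc F hFloc
          intro j hj
          have hne : i + j ≠ Z := by
            intro h
            exact hiz (unique_decomp hk1 hext hi hj h)
          rw [Function.update_of_ne hne]
      show F _ = a
      have : F (fun i => iterRule F k fun j => Function.update u Z b (i + j))
          = F (Function.update v z c) := hFloc _ _ key
      rw [this, hc]

end Aux

theorem stmt17 {d : ℕ} {A : Type*} [Fintype A] [Nonempty A]
    (f : Config A d → Config A d)
    (hcomm : ∀ l : Zd d, ∀ x, f (shift l x) = shift l (f x))
    (I : Set (Zd d)) (hIfin : I.Finite) (hdom : IsCADomain f I)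
    (F : (Zd d → A) → A)
    (hF : ∀ x : Config A d, ∀ j : Zd d, f x j = F fun i => x (j + i))
    (hFloc : ∀ u v : Zd d → A, (∀ i ∈ I, u i = v i) → F u = F v)
    -- `f` is permutative: permutative at every nonzero extreme point of `𝕀 = conv(I ∪ {0})`
    (hperm : ∀ z : Zd d, z ≠ 0 →
      emb z ∈ Set.extremePoints ℝ (convexHull ℝ (emb '' (I ∪ {0}))) → PermutativeAt F z) :
    ∀ k : ℕ, 1 ≤ k →
      ∃ (Ik : Set (Zd d)) (Fk : (Zd d → A) → A),
        Ik.Finite ∧ IsCADomain (f^[k]) Ik ∧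
        (∀ x : Config A d, ∀ j : Zd d, f^[k] x j = Fk fun i => x (j + i)) ∧
        (∀ u v : Zd d → A, (∀ i ∈ Ik, u i = v i) → Fk u = Fk v) ∧
        (∀ z : Zd d, z ≠ 0 →
          emb z ∈ Set.extremePoints ℝ (convexHull ℝ (emb '' (Ik ∪ {0}))) →
          PermutativeAt Fk z) ∧
        convexHull ℝ (emb '' (Ik ∪ {0})) = (k : ℝ) • convexHull ℝ (emb '' (I ∪ {0})) := by
  classical
  rcases subsingleton_or_nontrivial A with hsub | hnt
  · -- trivial alphabet
    intro k hk
    refine ⟨∅, fun _ => Classical.arbitrary A, Set.finite_empty,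
      ⟨fun x y j _ => Subsingleton.elim _ _, fun T _ => Set.empty_subset T⟩,
      fun x j => Subsingleton.elim _ _, fun u v _ => rfl,
      fun z hz hext u a => ⟨Classical.arbitrary A, Subsingleton.elim _ _⟩, ?_⟩
    have hI : I = ∅ :=
      Set.subset_empty_iff.1 (hdom.2 ∅ (fun x y j _ => Subsingleton.elim _ _))
    rw [hI]
    simp [emb_zero, convexHull_singleton, Set.smul_set_singleton]
  · intro k hk
    set C := convexHull ℝ (emb '' (I ∪ {0})) with hC
    set g := f^[k] with hg
    set Ik := sumSet I k ∩ core g with hIk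
    set Fk := iterRule F k with hFk
    have hgF : ∀ (x : Config A d) (j : Zd d), g x j = Fk fun i => x (j + i) :=
      fun x j => iter_eq f F hF k x j
    have hsum_rule : HasRule g (sumSet I k) := by
      intro x y j h
      rw [hgF, hgF]
      exact iter_loc F hFloc k _ _ (fun i hi => h i hi)
    have hIk_rule : HasRule g Ik :=
      hasRule_inter_core (sumSet I k).ncard _ (sumSet_finite hIfin k) le_rfl hsum_rule
    have hIk_fin : Ik.Finite := (sumSet_finite hIfin k).inter_of_left _
    have hIk_min : ∀ T, HasRule g T → Ik ⊆ T :=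
      fun T hT => Set.inter_subset_right.trans (core_subset hT)
    have h1 : ∀ x : Config A d, g x 0 = Fk x := by
      intro x
      rw [hgF]
      congr 1
      funext i
      rw [zero_add]
    have hFkloc : ∀ u v : Zd d → A, (∀ i ∈ Ik, u i = v i) → Fk u = Fk v := by
      intro u v h
      have := hIk_rule u v 0 (fun i hi => by simpa using h i hi)
      rwa [h1, h1] at this
    have hmem : ∀ z : Zd d, z ∈ I → z ≠ 0 → emb z ∈ Set.extremePoints ℝ C → k • z ∈ Ik := by
      intro z hzI hz hext
      refine ⟨nsmul_mem_sumSet hzI k hk, ?_⟩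
      exact Set.mem_sInter.2 fun T hT =>
        mem_of_permutative hgF (perm_iter F hFloc hperm k hk z hz hext) hT
    have hSfin : (emb '' (I ∪ {0})).Finite := (hIfin.union (Set.finite_singleton 0)).image _
    set E := C.extremePoints ℝ with hE
    have hES : E ⊆ emb '' (I ∪ {0}) := extremePoints_convexHull_subset
    have hEfin : E.Finite := hSfin.subset hES
    have hKM : C = convexHull ℝ E := by
      have h2 := closure_convexHull_extremePoints (hSfin.isCompact_convexHull (𝕜 := ℝ))
        (convex_convexHull ℝ _)
      rw [(hEfin.isClosed_convexHull (𝕜 := ℝ)).closure_eq] at h2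
      exact h2.symm
    have hullsub : convexHull ℝ (emb '' (Ik ∪ {0})) ⊆ (k : ℝ) • C := by
      apply convexHull_min _ ((convex_convexHull ℝ _).smul _)
      rintro x ⟨w, hw, rfl⟩
      rcases hw with hw | hw
      · exact mem_smul_hull k hk w hw.1
      · rw [Set.mem_singleton_iff.1 hw, emb_zero]
        exact ⟨0, subset_convexHull ℝ _ ⟨0, Or.inr rfl, emb_zero⟩, smul_zero _⟩
    have hkE : (k : ℝ) • E ⊆ emb '' (Ik ∪ {0}) := by
      rintro x ⟨e, he, rfl⟩
      obtain ⟨z0, hz0, rfl⟩ := hES he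
      by_cases h0 : z0 = 0
      · subst h0
        exact ⟨0, Or.inr rfl, by simp [emb_zero]⟩
      · have hz0I : z0 ∈ I := by
          rcases hz0 with h | h
          · exact h
          · exact absurd (Set.mem_singleton_iff.1 h) h0
        exact ⟨k • z0, Or.inl (hmem z0 hz0I h0 he), emb_nsmul k z0⟩
    have hullsup : (k : ℝ) • C ⊆ convexHull ℝ (emb '' (Ik ∪ {0})) := by
      rw [hKM, ← convexHull_smul]
      exact convexHull_mono hkE
    have hEQ : convexHull ℝ (emb '' (Ik ∪ {0})) = (k : ℝ) • C :=
      Set.Subset.antisymm hullsub hullsup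
    refine ⟨Ik, Fk, hIk_fin, ⟨hIk_rule, hIk_min⟩, hgF, hFkloc, ?_, hEQ⟩
    intro z' hz' hext'
    rw [hEQ, hKM, ← convexHull_smul] at hext'
    have hmem' : emb z' ∈ (k : ℝ) • E := extremePoints_convexHull_subset hext'
    obtain ⟨e, he, heq⟩ := hmem'
    obtain ⟨z0, hz0, rfl⟩ := hES he
    have h0 : z0 ≠ 0 := by
      rintro rfl
      apply hz'
      apply emb_inj
      rw [← heq]
      simp [emb_zero]
    have hz0I : z0 ∈ I := by
      rcases hz0 with h | h
      · exact h
      · exact absurd (Set.mem_singleton_iff.1 h) h0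
    have hz'eq : z' = k • z0 := by
      apply emb_inj
      rw [← heq, emb_nsmul]
    rw [hz'eq]
    exact perm_iter F hFloc hperm k hk z0 h0 he
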